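/- Let S¹, S², …, S^{4^m} be all words of length m over a 4-letter alphabet sorted by free energy FE, and let Δ = max_i (FE(S^{i+1}) − FE(S^i)) be the largest gap between consecutive free energies. Then Δ ≤ 2D where D = Γ_max − Γ_min. -/

import Mathlib

/-- The free energy of a word, `FE(X) = ∑_{i=1}^{m-1} Γ(x_i, x_{i+1})`. -/
def freeEnergy (Γ : Fin 4 → Fin 4 → ℤ) (l : List (Fin 4)) : ℤ :=
  ((l.zip l.tail).map fun p => Γ p.1 p.2).sum

/-- The finite set of free energies attained by length-`m` words over the
4-letter alphabet. -/
def energies (Γ : Fin 4 → Fin 4 → ℤ) (m : ℕ) : Finset ℤ :=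
  Finset.image (fun v : List.Vector (Fin 4) m => freeEnergy Γ v.toList)
    Finset.univ


lemma FE_nil (Γ : Fin 4 → Fin 4 → ℤ) : freeEnergy Γ [] = 0 := rfl
lemma FE_single (Γ : Fin 4 → Fin 4 → ℤ) (a : Fin 4) : freeEnergy Γ [a] = 0 := rfl
lemma FE_cons (Γ : Fin 4 → Fin 4 → ℤ) (a b : Fin 4) (l : List (Fin 4)) :
    freeEnergy Γ (a :: b :: l) = Γ a b + freeEnergy Γ (b :: l) := by
  simp [freeEnergy]

lemma FE_split (Γ : Fin 4 → Fin 4 → ℤ) (c : Fin 4) (s : List (Fin 4)) :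
    ∀ p : List (Fin 4), freeEnergy Γ (p ++ c :: s) =
      freeEnergy Γ p + (p.getLast?.elim 0 fun a => Γ a c) + freeEnergy Γ (c :: s)
  | [] => by simp [FE_nil]
  | [a] => by simp [FE_single, FE_cons]
  | a :: b :: p => by
    have ih := FE_split Γ c s (b :: p)
    simp only [List.cons_append, FE_cons, List.getLast?_cons_cons]
    rw [show b :: (p ++ c :: s) = (b :: p) ++ c :: s from rfl, ih]
    ring

lemma FE_change (Γ : Fin 4 → Fin 4 → ℤ) (M N : ℤ)
    (hM : ∀ a b, Γ a b ≤ M) (hN : ∀ a b, N ≤ Γ a b)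
    (p s : List (Fin 4)) (c c' : Fin 4) :
    freeEnergy Γ (p ++ c :: s) - freeEnergy Γ (p ++ c' :: s) ≤ 2 * (M - N) := by
  rw [FE_split, FE_split]
  have h1 : (p.getLast?.elim 0 fun a => Γ a c) - (p.getLast?.elim 0 fun a => Γ a c') ≤ M - N := by
    cases p.getLast? with
    | none => simp; have := hN c c; have := hM c c; omega
    | some a => simp; have := hM a c; have := hN a c'; omega
  have h2 : freeEnergy Γ (c :: s) - freeEnergy Γ (c' :: s) ≤ M - N := by
    cases s with
    | nil => simp [FE_single]; have := hN c c; have := hM c c; omega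
    | cons h t =>
      rw [FE_cons, FE_cons]
      have := hM c h; have := hN c' h; omega
  omega

lemma step_bound (Γ : Fin 4 → Fin 4 → ℤ) (M N : ℤ)
    (hM : ∀ a b, Γ a b ≤ M) (hN : ∀ a b, N ≤ Γ a b)
    (x y : List (Fin 4)) (j : ℕ) (hjx : j < x.length) (hjy : j < y.length) :
    freeEnergy Γ (y.take (j+1) ++ x.drop (j+1)) -
      freeEnergy Γ (y.take j ++ x.drop j) ≤ 2 * (M - N) := by
  rw [List.take_succ, List.drop_eq_getElem_cons hjx]
  have : y[j]? = some y[j] := List.getElem?_eq_getElem hjy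
  rw [this]
  simp only [Option.toList_some, List.append_assoc, List.singleton_append]
  exact FE_change Γ M N hM hN (y.take j) (x.drop (j+1)) y[j] x[j]


lemma mem_energies {Γ : Fin 4 → Fin 4 → ℤ} {m : ℕ} {E : ℤ} :
    E ∈ energies Γ m ↔ ∃ l : List (Fin 4), l.length = m ∧ freeEnergy Γ l = E := by
  simp only [energies, Finset.mem_image, Finset.mem_univ, true_and]
  constructor
  · rintro ⟨v, hv⟩; exact ⟨v.toList, v.2, hv⟩
  · rintro ⟨l, hl, hE⟩; exact ⟨⟨l, hl⟩, hE⟩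

/-- Sorting all length-`m` (`m ≥ 2`) words by free energy, the largest gap `Δ`
between consecutive energies satisfies `Δ ≤ 2D` where `D = Γ_max − Γ_min`:
any two attained energies `E₁ < E₂` with no attained energy strictly between
them satisfy `E₂ − E₁ ≤ 2D`. -/
theorem stmt_14 (Γ : Fin 4 → Fin 4 → ℤ) (m : ℕ) (hm : 2 ≤ m) :
    ∀ E₁ ∈ energies Γ m, ∀ E₂ ∈ energies Γ m, E₁ < E₂ →
      (∀ E ∈ energies Γ m, ¬(E₁ < E ∧ E < E₂)) →
      E₂ - E₁ ≤
        2 * ((Finset.univ.sup' Finset.univ_nonempty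
            fun p : Fin 4 × Fin 4 => Γ p.1 p.2) -
          (Finset.univ.inf' Finset.univ_nonempty
            fun p : Fin 4 × Fin 4 => Γ p.1 p.2)) := by
  intro E₁ h1 E₂ h2 hlt hgap
  set M := Finset.univ.sup' Finset.univ_nonempty fun p : Fin 4 × Fin 4 => Γ p.1 p.2 with hMdef
  set N := Finset.univ.inf' Finset.univ_nonempty fun p : Fin 4 × Fin 4 => Γ p.1 p.2 with hNdef
  have hM : ∀ a b, Γ a b ≤ M := fun a b =>
    Finset.le_sup' (f := fun p : Fin 4 × Fin 4 => Γ p.1 p.2) (Finset.mem_univ (a, b))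
  have hN : ∀ a b, N ≤ Γ a b := fun a b =>
    Finset.inf'_le (f := fun p : Fin 4 × Fin 4 => Γ p.1 p.2) (Finset.mem_univ (a, b))
  obtain ⟨x, hxl, hxE⟩ := mem_energies.mp h1
  obtain ⟨y, hyl, hyE⟩ := mem_energies.mp h2
  set f : ℕ → ℤ := fun j => freeEnergy Γ (y.take j ++ x.drop j) with hf
  have hf0 : f 0 = E₁ := by simp [hf, hxE]
  have hfm : f m = E₂ := by
    simp [hf, List.take_of_length_le (le_of_eq hyl),
      List.drop_eq_nil_of_le (le_of_eq hxl), hyE]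
  have hfmem : ∀ j ≤ m, f j ∈ energies Γ m := by
    intro j hj
    exact mem_energies.mpr ⟨y.take j ++ x.drop j, by
      simp [List.length_take, List.length_drop, hxl, hyl]; omega, rfl⟩
  have hPex : ∃ j, E₂ ≤ f j := ⟨m, le_of_eq hfm.symm⟩
  set k := Nat.find hPex with hk
  have hkspec : E₂ ≤ f k := Nat.find_spec hPex
  have hkm : k ≤ m := Nat.find_le (le_of_eq hfm.symm)
  have hk0 : k ≠ 0 := by
    intro h
    rw [h] at hkspec; rw [hf0] at hkspec; omega
  obtain ⟨j, hkj⟩ : ∃ j, k = j + 1 := ⟨k - 1, by omega⟩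
  rw [hkj] at hkspec hkm
  have hjlt : ¬ E₂ ≤ f j := Nat.find_min hPex (by omega)
  have hjm : j < m := by omega
  have hjE : f j ≤ E₁ := by
    have := hgap (f j) (hfmem j (by omega))
    omega
  have hstep : f (j + 1) - f j ≤ 2 * (M - N) :=
    step_bound Γ M N hM hN x y j (by omega) (by omega)
  omega
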